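/- The ℂ-vector space of linear forms contained in the ideal I_{T,L} is spanned by the differences q_g − q_h, where g = (g_1,…,g_m) and h = (h_1,…,h_m) range over pairs of elements of G^m satisfying L(g(e)) = L(h(e)) for every edge e of T. -/

import Mathlib

open MvPolynomial

attribute [local instance] Classical.propDecidable

/-- A finite rooted tree, given by a parent function on a finite vertex set. -/
structure PhyloTree where
  V : Type
  fintypeV : Fintype V
  root : V
  parent : V → V
  parent_root : parent root = root
  reaches_root : ∀ v, ∃ n : ℕ, parent^[n] v = root

attribute [instance] PhyloTree.fintypeV

namespace PhyloTree

variable (T : PhyloTree)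

/-- A vertex is a leaf if it has no children. -/
def IsLeaf (v : T.V) : Prop := ∀ u, T.parent u = v → u = v

/-- The type of leaves of `T`. -/
def Leaf : Type := {v : T.V // T.IsLeaf v}

noncomputable instance : Fintype T.Leaf :=
  have : DecidablePred T.IsLeaf := Classical.decPred _
  Subtype.fintype _

/-- `u` is a (weak) descendant of `v`. -/
def Desc (u v : T.V) : Prop := ∃ n : ℕ, T.parent^[n] u = v

/-- The edges of `T` are indexed by its vertices: a vertex `v` indexes the edge from
`parent v` to `v`, and the root indexes the extra pendant root edge `e_r`.
`leavesBelow v` is the set `Λ(e)` of leaves below the edge indexed by `v`. -/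
noncomputable def leavesBelow (v : T.V) : Finset T.Leaf :=
  Finset.univ.filter fun l => T.Desc l.1 v

/-- `T` is a binary tree: every non-leaf vertex has exactly two children. -/
def IsBinary : Prop :=
  ∀ v : T.V, ¬ T.IsLeaf v →
    (Finset.univ.filter fun u => T.parent u = v ∧ u ≠ v).card = 2

variable {G 𝓛 : Type} [AddCommGroup G] [Fintype G]

/-- `g(e)`: the sum of the group elements at the leaves below the edge `e`. -/
noncomputable def gsum (g : T.Leaf → G) (e : T.V) : G := ∑ l ∈ T.leavesBelow e, g l

/-- The monomial parameterization in Fourier coordinates: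
`q_g ↦ ∏_{e ∈ E(T)} a^{(e)}_{L(g(e))}`. -/
noncomputable def Phi (L : G → 𝓛) :
    MvPolynomial (T.Leaf → G) ℂ →ₐ[ℂ] MvPolynomial (T.V × 𝓛) ℂ :=
  aeval fun g => ∏ e : T.V, X (e, L (T.gsum g e))

/-- The ideal `I_{T,L}` of phylogenetic invariants in Fourier coordinates. -/
noncomputable def idealTL (L : G → 𝓛) : Ideal (MvPolynomial (T.Leaf → G) ℂ) :=
  RingHom.ker (T.Phi L)

end PhyloTree

section Aux

open Finsupp

/-- A product of variables is a monomial. -/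
lemma prod_X_single {σ ι R : Type*} [CommSemiring R] (s : Finset ι) (f : ι → σ) :
    ∏ i ∈ s, (X (f i) : MvPolynomial σ R) =
      monomial (∑ i ∈ s, Finsupp.single (f i) 1) 1 := by
  classical
  induction s using Finset.induction with
  | empty => simp
  | @insert a s h ih =>
      rw [Finset.prod_insert h, Finset.sum_insert h, ih, X, monomial_mul, one_mul]

/-- A monomial of degree 1 is a single variable exponent vector. -/
lemma weight_one_eq_single {σ : Type*} {m : σ →₀ ℕ}
    (hm : Finsupp.weight (1 : σ → ℕ) m = 1) : ∃ a, m = Finsupp.single a 1 := by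
  classical
  have hdeg : ∑ a ∈ m.support, m a = 1 := by
    have : Finsupp.weight (1 : σ → ℕ) m = ∑ a ∈ m.support, m a := by
      rw [Finsupp.weight_apply, Finsupp.sum]
      simp
    omega
  have hne : m.support.Nonempty := by
    by_contra h
    rw [Finset.not_nonempty_iff_eq_empty] at h
    rw [h] at hdeg
    simp at hdeg
  obtain ⟨a, ha⟩ := hne
  refine ⟨a, ?_⟩
  have hma : 1 ≤ m a := Nat.one_le_iff_ne_zero.mpr (Finsupp.mem_support_iff.mp ha)
  have hsplit : m a + ∑ b ∈ m.support.erase a, m b = 1 := by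
    rw [Finset.add_sum_erase _ _ ha]; exact hdeg
  have hma1 : m a = 1 := by omega
  have hrest : ∑ b ∈ m.support.erase a, m b = 0 := by omega
  ext b
  by_cases hba : b = a
  · subst hba; simp [hma1]
  · rw [Finsupp.single_apply, if_neg (fun h => hba h.symm)]
    by_cases hb : b ∈ m.support
    · have hbe : b ∈ m.support.erase a := Finset.mem_erase.mpr ⟨hba, hb⟩
      have := Finset.sum_eq_zero_iff.mp hrest b hbe
      omega
    · exact Finsupp.notMem_support_iff.mp hb

end Aux

namespace PhyloTree

variable (T : PhyloTree) {G 𝓛 : Type} [AddCommGroup G] [Fintype G]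

/-- The exponent vector of the monomial `Φ(q_g)`. -/
noncomputable def expv (L : G → 𝓛) (g : T.Leaf → G) : (T.V × 𝓛) →₀ ℕ :=
  ∑ e : T.V, Finsupp.single (e, L (T.gsum g e)) 1

lemma Phi_X (L : G → 𝓛) (g : T.Leaf → G) :
    T.Phi L (X g) = monomial (T.expv L g) 1 := by
  rw [Phi, aeval_X, expv, prod_X_single]

lemma expv_apply (L : G → 𝓛) (g : T.Leaf → G) (e : T.V) (l : 𝓛) :
    T.expv L g (e, l) = if L (T.gsum g e) = l then 1 else 0 := by
  classical
  rw [expv, Finsupp.finset_sum_apply]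
  rw [Finset.sum_eq_single e]
  · rw [Finsupp.single_apply]
    simp [Prod.ext_iff]
  · intro e' _ he'
    rw [Finsupp.single_apply, if_neg]
    simp only [Prod.mk.injEq, not_and]
    intro h; exact absurd h he'
  · intro h; exact absurd (Finset.mem_univ e) h

lemma expv_eq_iff (L : G → 𝓛) (g h : T.Leaf → G) :
    T.expv L g = T.expv L h ↔ ∀ e : T.V, L (T.gsum g e) = L (T.gsum h e) := by
  constructor
  · intro hD e
    have := DFunLike.congr_fun hD (e, L (T.gsum h e))
    rw [expv_apply, expv_apply, if_pos rfl] at this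
    by_contra hne
    rw [if_neg hne] at this
    exact zero_ne_one this
  · intro hL
    unfold expv
    exact Finset.sum_congr rfl fun e _ => by rw [hL e]

end PhyloTree

/-- **Proposition (linear invariants).** The vector space of linear forms contained in the
ideal `I_{T,L}` is spanned by the differences `q_g − q_h` where `L(g(e)) = L(h(e))` for
all edges `e` of `T`. -/
theorem linear_invariants_spanned_by_differences
    (T : PhyloTree) {G 𝓛 : Type} [AddCommGroup G] [Fintype G] (L : G → 𝓛) :
    (homogeneousSubmodule (T.Leaf → G) ℂ 1) ⊓
        Submodule.restrictScalars ℂ (T.idealTL L) =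
      Submodule.span ℂ {p : MvPolynomial (T.Leaf → G) ℂ |
        ∃ g h : T.Leaf → G,
          (∀ e : T.V, L (T.gsum g e) = L (T.gsum h e)) ∧ p = X g - X h} := by
  classical
  apply le_antisymm
  · -- hard direction
    rintro p ⟨hp1, hp2⟩
    simp only [SetLike.mem_coe, Submodule.restrictScalars_mem, PhyloTree.idealTL,
      RingHom.mem_ker] at hp2
    simp only [SetLike.mem_coe, mem_homogeneousSubmodule] at hp1
    set D : (T.Leaf → G) → ((T.V × 𝓛) →₀ ℕ) := T.expv L with hD
    set c : (T.Leaf → G) → ℂ := fun g => coeff (Finsupp.single g 1) p with hc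
    have hinj : Function.Injective fun g : T.Leaf → G => Finsupp.single g (1 : ℕ) :=
      Finsupp.single_left_injective one_ne_zero
    -- Step 1 : p = ∑ g, c g • X g
    have step1 : p = ∑ g : T.Leaf → G, c g • X g := by
      have himg : p.support ⊆ Finset.univ.image fun g : T.Leaf → G => Finsupp.single g 1 := by
        intro m hm
        have hcm : coeff m p ≠ 0 := MvPolynomial.mem_support_iff.mp hm
        obtain ⟨a, ha⟩ := weight_one_eq_single (hp1 hcm)
        exact Finset.mem_image.mpr ⟨a, Finset.mem_univ a, ha.symm⟩
      calc p = ∑ m ∈ p.support, monomial m (coeff m p) := p.as_sum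
        _ = ∑ m ∈ Finset.univ.image (fun g : T.Leaf → G => Finsupp.single g 1),
              monomial m (coeff m p) := by
            refine Finset.sum_subset himg fun m _ hm => ?_
            rw [MvPolynomial.notMem_support_iff.mp hm, map_zero]
        _ = ∑ g : T.Leaf → G, monomial (Finsupp.single g 1) (coeff (Finsupp.single g 1) p) :=
            Finset.sum_image fun a _ b _ hab => hinj hab
        _ = ∑ g : T.Leaf → G, c g • X g := by
            refine Finset.sum_congr rfl fun g _ => ?_
            rw [X, smul_monomial, smul_eq_mul, mul_one]
    -- Step 2 : fiberwise sums of coefficients vanish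
    have step2 : ∀ g1 : T.Leaf → G, ∑ g ∈ Finset.univ.filter fun g => D g = D g1, c g = 0 := by
      intro g1
      have h0 : (0 : MvPolynomial (T.V × 𝓛) ℂ) = ∑ g : T.Leaf → G, c g • monomial (D g) 1 := by
        rw [← hp2]
        conv_lhs => rw [step1]
        rw [map_sum]
        exact Finset.sum_congr rfl fun g _ => by rw [map_smul, T.Phi_X]
      have h1 := congrArg (coeff (D g1)) h0
      rw [coeff_zero, coeff_sum] at h1
      have h2 : ∀ g : T.Leaf → G,
          coeff (D g1) (c g • monomial (D g) (1 : ℂ)) = if D g = D g1 then c g else 0 := by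
        intro g
        rw [coeff_smul, coeff_monomial]
        split <;> simp
      rw [Finset.sum_congr rfl fun g _ => h2 g, ← Finset.sum_filter] at h1
      exact h1.symm
    -- Step 3 : representatives of fibers
    have : Nonempty (T.Leaf → G) := ⟨fun _ => 0⟩
    set rep : (T.Leaf → G) → (T.Leaf → G) := fun g => Function.invFun D (D g) with hrepdef
    have hrep : ∀ g, D (rep g) = D g := fun g => Function.invFun_eq ⟨g, rfl⟩
    have hrepcong : ∀ {g h}, D g = D h → rep g = rep h := fun {g h} e => by
      simp only [hrepdef, e]
    -- decomposition
    have decomp : p = (∑ g : T.Leaf → G, c g • (X g - X (rep g)))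
        + ∑ g : T.Leaf → G, c g • X (rep g) := by
      rw [← Finset.sum_add_distrib]
      rw [step1]
      refine Finset.sum_congr rfl fun g _ => ?_
      rw [← smul_add, sub_add_cancel]
    have hzero : (∑ g : T.Leaf → G, c g • (X (rep g) : MvPolynomial (T.Leaf → G) ℂ)) = 0 := by
      rw [← Finset.sum_fiberwise_of_maps_to (g := rep) (t := Finset.univ)
        (fun i _ => Finset.mem_univ (rep i))]
      refine Finset.sum_eq_zero fun g1 _ => ?_
      rcases Finset.eq_empty_or_nonempty (Finset.univ.filter fun g => rep g = g1) with he | hne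
      · rw [he, Finset.sum_empty]
      · obtain ⟨g2, hg2⟩ := hne
        have hg2' : rep g2 = g1 := (Finset.mem_filter.mp hg2).2
        have hsame : (Finset.univ.filter fun g => rep g = g1)
            = Finset.univ.filter fun g => D g = D g2 := by
          ext g
          simp only [Finset.mem_filter, Finset.mem_univ, true_and]
          constructor
          · intro h
            have : D (rep g) = D (rep g2) := by rw [h, hg2']
            rw [hrep, hrep] at this; exact this
          · intro h
            rw [hrepcong h, hg2']
        calc ∑ g ∈ Finset.univ.filter fun g => rep g = g1, c g • X (rep g)
            = ∑ g ∈ Finset.univ.filter fun g => rep g = g1, c g • X g1 :=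
              Finset.sum_congr rfl fun g hg => by rw [(Finset.mem_filter.mp hg).2]
          _ = (∑ g ∈ Finset.univ.filter fun g => rep g = g1, c g) • X g1 := by
              rw [Finset.sum_smul]
          _ = 0 := by rw [hsame, step2 g2, zero_smul]
    rw [decomp, hzero, add_zero]
    refine Submodule.sum_mem _ fun g _ => Submodule.smul_mem _ _ (Submodule.subset_span ?_)
    exact ⟨g, rep g, (T.expv_eq_iff L g (rep g)).mp (hrep g).symm, rfl⟩
  · -- easy direction
    rw [Submodule.span_le]
    rintro p ⟨g, h, hL, rfl⟩
    refine ⟨?_, ?_⟩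
    · exact sub_mem (isHomogeneous_X ℂ g) (isHomogeneous_X ℂ h)
    · rw [SetLike.mem_coe, Submodule.restrictScalars_mem, PhyloTree.idealTL, RingHom.mem_ker,
        map_sub, T.Phi_X, T.Phi_X, (T.expv_eq_iff L g h).mpr hL, sub_self]
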